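/- There exists a constant C > 0 such that for every integer j ≥ 1, every infinitely differentiable function ψ : ℝ → ℂ whose support is contained in [2^j, 2^(j+2)] ∪ [-2^(j+2), -2^j], every r ∈ ℝ, and every t ∈ ℝ with t ≠ 0, the oscillatory integral I = ∫_ℝ exp(i(k·r - t·√(1+k²)))·ψ(k) dk satisfies all three bounds: |I| ≤ C·∫_ℝ |ψ(k)| dk; |I| ≤ C·|t|^(-1/2)·2^(3j/2)·∫_ℝ |ψ'(k)| dk; and |I| ≤ C·|t|^(-3/2)·2^(3j/2)·∫_ℝ |h''(k) + i·r·h'(k)| dk, where h(k) = (√(1+k²)/k)·ψ(k) for k ≠ 0 and h(0) = 0 (h is smooth since the support of ψ is bounded away from 0). -/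

import Mathlib

open Complex MeasureTheory

section VdCProof
open Set intervalIntegral

lemma vdc1 (φ φ' φ'' : ℝ → ℝ) (α β δ : ℝ) (hab : α ≤ β) (hδ : 0 < δ)
    (hd1 : ∀ x ∈ Icc α β, HasDerivAt φ (φ' x) x)
    (hd2 : ∀ x ∈ Icc α β, HasDerivAt φ' (φ'' x) x)
    (hc2 : ContinuousOn φ'' (Icc α β))
    (h2 : ∀ x ∈ Icc α β, 0 ≤ φ'' x)
    (hsgn : (∀ x ∈ Icc α β, δ ≤ φ' x) ∨ (∀ x ∈ Icc α β, φ' x ≤ -δ)) :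
    ‖∫ x in α..β, Complex.exp (Complex.I * φ x)‖ ≤ 3 / δ := by
  have huIcc : uIcc α β = Icc α β := uIcc_of_le hab
  have hne : ∀ x ∈ Icc α β, φ' x ≠ 0 := by
    intro x hx
    rcases hsgn with hs | hs
    · exact ne_of_gt (lt_of_lt_of_le hδ (hs x hx))
    · exact ne_of_lt (lt_of_le_of_lt (hs x hx) (by linarith))
  have hc1 : ContinuousOn φ' (Icc α β) := fun x hx => ((hd2 x hx).continuousAt).continuousWithinAt
  set u : ℝ → ℂ := fun x => (Complex.I * φ' x)⁻¹ with hu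
  set v : ℝ → ℂ := fun x => Complex.exp (Complex.I * φ x) with hv
  set u' : ℝ → ℂ := fun x => -(Complex.I * φ'' x) / (Complex.I * φ' x) ^ 2 with hu'
  set v' : ℝ → ℂ := fun x => Complex.exp (Complex.I * φ x) * (Complex.I * φ' x) with hv'
  have hIne : ∀ x ∈ Icc α β, (Complex.I * (φ' x : ℂ)) ≠ 0 := by
    intro x hx
    exact mul_ne_zero Complex.I_ne_zero (Complex.ofReal_ne_zero.mpr (hne x hx))
  have hud : ∀ x ∈ uIcc α β, HasDerivAt u (u' x) x := by
    intro x hx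
    rw [huIcc] at hx
    have h1 : HasDerivAt (fun y => Complex.I * (φ' y : ℂ)) (Complex.I * φ'' x) x :=
      ((hd2 x hx).ofReal_comp).const_mul Complex.I
    have := (hasDerivAt_const x (1:ℂ)).div h1 (hIne x hx)
    simpa only [hu, hu', Pi.div_def, one_div, zero_mul, one_mul, zero_sub] using this
  have hvd : ∀ x ∈ uIcc α β, HasDerivAt v (v' x) x := by
    intro x hx
    rw [huIcc] at hx
    exact (((hd1 x hx).ofReal_comp).const_mul Complex.I).cexp
  have hcφ : ContinuousOn φ (Icc α β) := fun x hx => ((hd1 x hx).continuousAt).continuousWithinAt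
  have hcu' : ContinuousOn u' (uIcc α β) := by
    rw [huIcc]
    apply ContinuousOn.div
    · exact (continuousOn_const.mul (Complex.continuous_ofReal.comp_continuousOn hc2)).neg
    · exact (continuousOn_const.mul (Complex.continuous_ofReal.comp_continuousOn hc1)).pow 2
    · exact fun x hx => pow_ne_zero 2 (hIne x hx)
  have hcv : ContinuousOn v (uIcc α β) := by
    rw [huIcc]
    exact (continuousOn_const.mul (Complex.continuous_ofReal.comp_continuousOn hcφ)).cexp
  have hcv' : ContinuousOn v' (uIcc α β) := by
    refine hcv.mul ?_
    rw [huIcc]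
    exact continuousOn_const.mul (Complex.continuous_ofReal.comp_continuousOn hc1)
  have hiu' : IntervalIntegrable u' volume α β := hcu'.intervalIntegrable
  have hiv' : IntervalIntegrable v' volume α β := hcv'.intervalIntegrable
  have hIBP := intervalIntegral.integral_mul_deriv_eq_deriv_mul hud hvd hiu' hiv'
  have key : (∫ x in α..β, Complex.exp (Complex.I * φ x)) = ∫ x in α..β, u x * v' x := by
    refine (integral_congr ?_).symm
    intro x hx
    rw [huIcc] at hx
    simp only [hu, hv']
    rw [mul_comm (Complex.exp _), ← mul_assoc, inv_mul_cancel₀ (hIne x hx), one_mul]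
  -- norms
  have hnormv : ∀ x : ℝ, ‖v x‖ = 1 := by
    intro x
    simp only [hv, Complex.norm_exp]
    simp
  have habs : ∀ x ∈ Icc α β, δ ≤ |φ' x| := by
    intro x hx
    rcases hsgn with hs | hs
    · exact le_trans (hs x hx) (le_abs_self _)
    · have := hs x hx
      rw [abs_of_nonpos (by linarith)]
      linarith
  have hnormu : ∀ x ∈ Icc α β, ‖u x‖ ≤ 1 / δ := by
    intro x hx
    simp only [hu, norm_inv]
    have h1 : ‖Complex.I * (φ' x : ℂ)‖ = |φ' x| := by
      rw [norm_mul, Complex.norm_I, one_mul, Complex.norm_real, Real.norm_eq_abs]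
    rw [h1, one_div]
    exact inv_anti₀ hδ (habs x hx)
  -- FTC for the integral of φ''/φ'^2
  have hFTC : (∫ x in α..β, φ'' x / (φ' x) ^ 2) = (-(φ' β)⁻¹) - (-(φ' α)⁻¹) := by
    apply intervalIntegral.integral_eq_sub_of_hasDerivAt
    · intro x hx
      rw [huIcc] at hx
      have := ((hd2 x hx).inv (hne x hx)).neg
      simpa [div_eq_mul_inv, neg_div, Pi.neg_def, Pi.inv_def] using this
    · apply ContinuousOn.intervalIntegrable
      rw [huIcc]
      exact hc2.div (hc1.pow 2) (fun x hx => pow_ne_zero 2 (hne x hx))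
  have hFTCle : (∫ x in α..β, φ'' x / (φ' x) ^ 2) ≤ 1 / δ := by
    rw [hFTC]
    rcases hsgn with hs | hs
    · have hA : δ ≤ φ' α := hs α ⟨le_refl α, hab⟩
      have hB : δ ≤ φ' β := hs β ⟨hab, le_refl β⟩
      have h1 : (φ' α)⁻¹ ≤ 1 / δ := by
        rw [one_div]; exact inv_anti₀ hδ hA
      have h2 : 0 < (φ' β)⁻¹ := inv_pos.mpr (lt_of_lt_of_le hδ hB)
      linarith
    · have hA : φ' α ≤ -δ := hs α ⟨le_refl α, hab⟩
      have hB : φ' β ≤ -δ := hs β ⟨hab, le_refl β⟩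
      have h1 : -(φ' β)⁻¹ ≤ 1 / δ := by
        rw [one_div, ← inv_neg]
        exact inv_anti₀ hδ (by linarith)
      have h2 : (φ' α)⁻¹ < 0 := inv_lt_zero.mpr (by linarith)
      linarith
  -- bound ∫ ‖u' v‖
  have hbound2 : ‖∫ x in α..β, u' x * v x‖ ≤ 1 / δ := by
    refine le_trans (intervalIntegral.norm_integral_le_integral_norm hab) ?_
    have heq : (∫ x in α..β, ‖u' x * v x‖) = ∫ x in α..β, φ'' x / (φ' x) ^ 2 := by
      apply integral_congr
      intro x hx
      rw [huIcc] at hx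
      show ‖u' x * v x‖ = _
      rw [norm_mul, hnormv x, mul_one]
      simp only [hu', norm_div, norm_neg, norm_mul, Complex.norm_I, one_mul, norm_pow,
        Complex.norm_real, Real.norm_eq_abs]
      rw [_root_.abs_of_nonneg (h2 x hx), _root_.sq_abs]
    rw [heq]
    exact hFTCle
  calc ‖∫ x in α..β, Complex.exp (Complex.I * φ x)‖
      = ‖u β * v β - u α * v α - ∫ x in α..β, u' x * v x‖ := by rw [key, hIBP]
    _ ≤ ‖u β * v β - u α * v α‖ + ‖∫ x in α..β, u' x * v x‖ := norm_sub_le _ _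
    _ ≤ (‖u β * v β‖ + ‖u α * v α‖) + ‖∫ x in α..β, u' x * v x‖ := by
        gcongr; exact norm_sub_le _ _
    _ ≤ (1 / δ * 1 + 1 / δ * 1) + 1 / δ := by
        refine add_le_add (add_le_add ?_ ?_) hbound2
        · rw [norm_mul, hnormv]
          exact mul_le_mul_of_nonneg_right (hnormu β ⟨hab, le_refl β⟩) zero_le_one
        · rw [norm_mul, hnormv]
          exact mul_le_mul_of_nonneg_right (hnormu α ⟨le_refl α, hab⟩) zero_le_one
    _ = 3 / δ := by ring


lemma vdc2pos (φ φ' φ'' : ℝ → ℝ) (a s L : ℝ) (has : a ≤ s) (hL : 0 < L)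
    (hd1 : ∀ x ∈ Icc a s, HasDerivAt φ (φ' x) x)
    (hd2 : ∀ x ∈ Icc a s, HasDerivAt φ' (φ'' x) x)
    (hc2 : ContinuousOn φ'' (Icc a s))
    (hlow : ∀ x ∈ Icc a s, L ≤ φ'' x) :
    ‖∫ x in a..s, Complex.exp (Complex.I * φ x)‖ ≤ 8 / Real.sqrt L := by
  set δ := Real.sqrt L with hδdef
  have hδ : 0 < δ := Real.sqrt_pos.mpr hL
  have hδsq : δ ^ 2 = L := Real.sq_sqrt hL.le
  have hc1 : ContinuousOn φ' (Icc a s) := fun x hx => ((hd2 x hx).continuousAt).continuousWithinAt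
  have hcφ : ContinuousOn φ (Icc a s) := fun x hx => ((hd1 x hx).continuousAt).continuousWithinAt
  have h2 : ∀ x ∈ Icc a s, 0 ≤ φ'' x := fun x hx => le_trans hL.le (hlow x hx)
  -- monotonicity of φ'
  have hmono : MonotoneOn φ' (Icc a s) := by
    apply monotoneOn_of_deriv_nonneg (convex_Icc a s) hc1
    · intro x hx
      rw [interior_Icc] at hx
      exact ((hd2 x (Ioo_subset_Icc_self hx)).differentiableAt).differentiableWithinAt
    · intro x hx
      rw [interior_Icc] at hx
      rw [(hd2 x (Ioo_subset_Icc_self hx)).deriv]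
      exact h2 x (Ioo_subset_Icc_self hx)
  -- growth of φ'
  have hgrow : ∀ x ∈ Icc a s, ∀ y ∈ Icc a s, x ≤ y → L * (y - x) ≤ φ' y - φ' x := by
    have hg : MonotoneOn (fun x => φ' x - L * x) (Icc a s) := by
      apply monotoneOn_of_deriv_nonneg (convex_Icc a s)
      · exact hc1.sub ((continuous_const.mul continuous_id).continuousOn)
      · intro x hx
        rw [interior_Icc] at hx
        exact (((hd2 x (Ioo_subset_Icc_self hx)).sub
          ((hasDerivAt_id x).const_mul L)).differentiableAt).differentiableWithinAt
      · intro x hx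
        rw [interior_Icc] at hx
        have hD : HasDerivAt (fun x => φ' x - L * x) (φ'' x - L * 1) x :=
          (hd2 x (Ioo_subset_Icc_self hx)).sub ((hasDerivAt_id x).const_mul L)
        rw [hD.deriv]
        have := hlow x (Ioo_subset_Icc_self hx)
        linarith
    intro x hx y hy hxy
    have := hg hx hy hxy
    simp only at this
    linarith
  have hintg : ∀ c d : ℝ, c ∈ Icc a s → d ∈ Icc a s →
      IntervalIntegrable (fun x => Complex.exp (Complex.I * φ x)) volume c d := by
    intro c d hc hd
    apply ContinuousOn.intervalIntegrable
    apply ContinuousOn.mono (s := Icc a s)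
    · exact (continuousOn_const.mul (Complex.continuous_ofReal.comp_continuousOn hcφ)).cexp
    · exact uIcc_subset_Icc hc hd
  by_cases hA : δ ≤ φ' a
  · have := vdc1 φ φ' φ'' a s δ has hδ hd1 hd2 hc2 h2
      (Or.inl (fun x hx => le_trans hA (hmono ⟨le_refl a, has⟩ hx hx.1)))
    calc ‖∫ x in a..s, Complex.exp (Complex.I * φ x)‖ ≤ 3 / δ := this
      _ ≤ 8 / δ := by apply div_le_div_of_nonneg_right <;> linarith
  · by_cases hB : φ' s ≤ -δ
    · have := vdc1 φ φ' φ'' a s δ has hδ hd1 hd2 hc2 h2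
        (Or.inr (fun x hx => le_trans (hmono hx ⟨has, le_refl s⟩ hx.2) hB))
      calc ‖∫ x in a..s, Complex.exp (Complex.I * φ x)‖ ≤ 3 / δ := this
        _ ≤ 8 / δ := by apply div_le_div_of_nonneg_right <;> linarith
    · push_neg at hA hB
      -- find p
      obtain ⟨p, hpmem, hp⟩ : ∃ p ∈ Icc a s, (φ' p = -δ ∨ (p = a ∧ -δ ≤ φ' a)) := by
        by_cases hpa : -δ ≤ φ' a
        · exact ⟨a, ⟨le_refl a, has⟩, Or.inr ⟨rfl, hpa⟩⟩
        · push_neg at hpa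
          have hmem : -δ ∈ Icc (φ' a) (φ' s) := ⟨hpa.le, hB.le⟩
          obtain ⟨p, hpmem, hpv⟩ := intermediate_value_Icc has hc1 hmem
          exact ⟨p, hpmem, Or.inl hpv⟩
      obtain ⟨q, hqmem, hq⟩ : ∃ q ∈ Icc a s, (φ' q = δ ∨ (q = s ∧ φ' s ≤ δ)) := by
        by_cases hqs : φ' s ≤ δ
        · exact ⟨s, ⟨has, le_refl s⟩, Or.inr ⟨rfl, hqs⟩⟩
        · push_neg at hqs
          have hmem : δ ∈ Icc (φ' a) (φ' s) := ⟨hA.le, hqs.le⟩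
          obtain ⟨q, hqmem, hqv⟩ := intermediate_value_Icc has hc1 hmem
          exact ⟨q, hqmem, Or.inl hqv⟩
      have hφp_lb : -δ ≤ φ' p := by rcases hp with h | ⟨rfl, h⟩ <;> [exact h.ge; exact h]
      have hφp_ub : φ' p ≤ δ := by
        rcases hp with h | ⟨rfl, h⟩
        · rw [h]; linarith
        · exact hA.le
      have hφq_ub : φ' q ≤ δ := by rcases hq with h | ⟨rfl, h⟩ <;> [exact h.le; exact h]
      have hφq_lb : -δ ≤ φ' q := by
        rcases hq with h | ⟨rfl, h⟩
        · rw [h]; linarith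
        · exact hB.le
      have hpq : p ≤ q := by
        by_contra hlt
        push_neg at hlt
        rcases hq with hq1 | ⟨rfl, _⟩
        · rcases hp with hp1 | ⟨rfl, _⟩
          · have := hmono hqmem hpmem hlt.le
            rw [hq1, hp1] at this
            linarith
          · exact absurd hqmem.1 (not_le.mpr hlt)
        · exact absurd hpmem.2 (not_le.mpr hlt)
      -- length bound
      have hlen : q - p ≤ 2 * δ / L := by
        have := hgrow p hpmem q hqmem hpq
        rw [le_div_iff₀ hL]
        nlinarith
      -- split the integral
      have hsplit : (∫ x in a..s, Complex.exp (Complex.I * φ x)) =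
          (∫ x in a..p, Complex.exp (Complex.I * φ x)) +
          (∫ x in p..q, Complex.exp (Complex.I * φ x)) +
          (∫ x in q..s, Complex.exp (Complex.I * φ x)) := by
        rw [integral_add_adjacent_intervals (hintg a p ⟨le_refl a, has⟩ hpmem)
          (hintg p q hpmem hqmem)]
        rw [integral_add_adjacent_intervals (hintg a q ⟨le_refl a, has⟩ hqmem)
          (hintg q s hqmem ⟨has, le_refl s⟩)]
      have hIccp : Icc a p ⊆ Icc a s := Icc_subset_Icc (le_refl a) hpmem.2
      have hIccq : Icc q s ⊆ Icc a s := Icc_subset_Icc hqmem.1 (le_refl s)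
      have bnd1 : ‖∫ x in a..p, Complex.exp (Complex.I * φ x)‖ ≤ 3 / δ := by
        rcases hp with hp1 | ⟨rfl, _⟩
        · apply vdc1 φ φ' φ'' a p δ hpmem.1 hδ (fun x hx => hd1 x (hIccp hx))
            (fun x hx => hd2 x (hIccp hx)) (hc2.mono hIccp) (fun x hx => h2 x (hIccp hx))
          right
          intro x hx
          have := hmono (hIccp hx) hpmem hx.2
          rw [hp1] at this
          exact this
        · simp only [intervalIntegral.integral_same, norm_zero]
          positivity
      have bnd3 : ‖∫ x in q..s, Complex.exp (Complex.I * φ x)‖ ≤ 3 / δ := by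
        rcases hq with hq1 | ⟨rfl, _⟩
        · apply vdc1 φ φ' φ'' q s δ hqmem.2 hδ (fun x hx => hd1 x (hIccq hx))
            (fun x hx => hd2 x (hIccq hx)) (hc2.mono hIccq) (fun x hx => h2 x (hIccq hx))
          left
          intro x hx
          have := hmono hqmem (hIccq hx) hx.1
          rw [hq1] at this
          exact this
        · simp only [intervalIntegral.integral_same, norm_zero]
          positivity
      have bnd2 : ‖∫ x in p..q, Complex.exp (Complex.I * φ x)‖ ≤ 2 / δ := by
        have hone : ∀ x ∈ Set.uIoc p q, ‖Complex.exp (Complex.I * φ x)‖ ≤ 1 := by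
          intro x hx
          rw [Complex.norm_exp]
          simp
        calc ‖∫ x in p..q, Complex.exp (Complex.I * φ x)‖ ≤ 1 * |q - p| :=
              intervalIntegral.norm_integral_le_of_norm_le_const hone
          _ = q - p := by rw [one_mul, _root_.abs_of_nonneg (by linarith : (0:ℝ) ≤ q - p)]
          _ ≤ 2 * δ / L := hlen
          _ = 2 / δ := by
              rw [← hδsq]
              field_simp
      calc ‖∫ x in a..s, Complex.exp (Complex.I * φ x)‖
          ≤ ‖∫ x in a..p, Complex.exp (Complex.I * φ x)‖ +
            ‖∫ x in p..q, Complex.exp (Complex.I * φ x)‖ +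
            ‖∫ x in q..s, Complex.exp (Complex.I * φ x)‖ := by
            rw [hsplit]
            exact le_trans (norm_add_le _ _) (by gcongr; exact norm_add_le _ _)
        _ ≤ 3 / δ + 2 / δ + 3 / δ := by gcongr
        _ = 8 / δ := by ring


lemma intint_conj (f : ℝ → ℂ) (a b : ℝ) :
    (∫ x in a..b, (starRingEnd ℂ) (f x)) = (starRingEnd ℂ) (∫ x in a..b, f x) := by
  simp only [intervalIntegral, integral_conj, map_sub]

lemma vdc2both (φ φ' φ'' : ℝ → ℝ) (a s L : ℝ) (has : a ≤ s) (hL : 0 < L)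
    (hd1 : ∀ x ∈ Icc a s, HasDerivAt φ (φ' x) x)
    (hd2 : ∀ x ∈ Icc a s, HasDerivAt φ' (φ'' x) x)
    (hc2 : ContinuousOn φ'' (Icc a s))
    (hsgn : (∀ x ∈ Icc a s, L ≤ φ'' x) ∨ (∀ x ∈ Icc a s, φ'' x ≤ -L)) :
    ‖∫ x in a..s, Complex.exp (Complex.I * φ x)‖ ≤ 8 / Real.sqrt L := by
  rcases hsgn with hs | hs
  · exact vdc2pos φ φ' φ'' a s L has hL hd1 hd2 hc2 hs
  · have key : (∫ x in a..s, Complex.exp (Complex.I * φ x)) =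
        (starRingEnd ℂ) (∫ x in a..s, Complex.exp (Complex.I * (fun y => -φ y) x)) := by
      rw [← intint_conj]
      apply intervalIntegral.integral_congr
      intro x _
      simp only
      rw [← Complex.exp_conj]
      congr 1
      simp [Complex.ofReal_neg]
    rw [key, RCLike.norm_conj]
    exact vdc2pos (fun y => -φ y) (fun y => -φ' y) (fun y => -φ'' y) a s L has hL
      (fun x hx => (hd1 x hx).neg) (fun x hx => (hd2 x hx).neg) hc2.neg
      (fun x hx => by have := hs x hx; linarith)

lemma vdc3 (φ φ' φ'' : ℝ → ℝ) (g g' : ℝ → ℂ) (a b L : ℝ) (hab : a ≤ b) (hL : 0 < L)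
    (hd1 : ∀ x, HasDerivAt φ (φ' x) x)
    (hd2 : ∀ x, HasDerivAt φ' (φ'' x) x)
    (hc2 : Continuous φ'')
    (hsgn : (∀ x ∈ Icc a b, L ≤ φ'' x) ∨ (∀ x ∈ Icc a b, φ'' x ≤ -L))
    (hg : ∀ x, HasDerivAt g (g' x) x) (hg' : Continuous g')
    (hga : g a = 0) (hgb : g b = 0) :
    ‖∫ x in a..b, Complex.exp (Complex.I * φ x) * g x‖ ≤
      (8 / Real.sqrt L) * ∫ x in a..b, ‖g' x‖ := by
  have hcφ : Continuous φ := continuous_iff_continuousAt.mpr fun x => (hd1 x).continuousAt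
  have hcφ' : Continuous φ' := continuous_iff_continuousAt.mpr fun x => (hd2 x).continuousAt
  set e : ℝ → ℂ := fun x => Complex.exp (Complex.I * φ x) with he
  have hce : Continuous e := (continuous_const.mul (Complex.continuous_ofReal.comp hcφ)).cexp
  set F : ℝ → ℂ := fun s => ∫ x in a..s, e x with hF
  have hFd : ∀ x : ℝ, HasDerivAt F (e x) x := by
    intro x
    exact intervalIntegral.integral_hasDerivAt_right (hce.intervalIntegrable a x)
      (hce.stronglyMeasurableAtFilter volume (nhds x)) hce.continuousAt
  have hcF : Continuous F := continuous_iff_continuousAt.mpr fun x => (hFd x).continuousAt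
  have hFa : F a = 0 := intervalIntegral.integral_same
  -- integration by parts
  have hIBP := intervalIntegral.integral_mul_deriv_eq_deriv_mul
    (u := F) (v := g) (u' := e) (v' := g') (a := a) (b := b)
    (fun x _ => hFd x) (fun x _ => hg x)
    (hce.intervalIntegrable a b) (hg'.intervalIntegrable a b)
  -- hIBP : ∫ F g' = F b g b - F a g a - ∫ e g
  have key : (∫ x in a..b, e x * g x) = -∫ x in a..b, F x * g' x := by
    rw [hIBP, hgb, hFa]
    ring
  -- bound on F
  have hFbound : ∀ x ∈ Icc a b, ‖F x‖ ≤ 8 / Real.sqrt L := by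
    intro x hx
    have hsub : Icc a x ⊆ Icc a b := Icc_subset_Icc (le_refl a) hx.2
    exact vdc2both φ φ' φ'' a x L hx.1 hL (fun y hy => hd1 y) (fun y hy => hd2 y)
      (hc2.continuousOn) (by rcases hsgn with hs | hs; exacts [Or.inl fun y hy => hs y (hsub hy), Or.inr fun y hy => hs y (hsub hy)])
  have h8 : 0 ≤ 8 / Real.sqrt L := by positivity
  calc ‖∫ x in a..b, e x * g x‖ = ‖∫ x in a..b, F x * g' x‖ := by rw [key, norm_neg]
    _ ≤ ∫ x in a..b, ‖F x * g' x‖ := intervalIntegral.norm_integral_le_integral_norm hab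
    _ ≤ ∫ x in a..b, (8 / Real.sqrt L) * ‖g' x‖ := by
        apply intervalIntegral.integral_mono_on hab
        · exact ((hcF.mul hg').norm).intervalIntegrable a b
        · exact (continuous_const.mul hg'.norm).intervalIntegrable a b
        · intro x hx
          rw [norm_mul]
          exact mul_le_mul_of_nonneg_right (hFbound x hx) (norm_nonneg _)
    _ = (8 / Real.sqrt L) * ∫ x in a..b, ‖g' x‖ := by
        rw [← intervalIntegral.integral_const_mul]


lemma one_add_sq_pos (k : ℝ) : (0:ℝ) < 1 + k ^ 2 := by positivity

lemma sqrt_one_add_sq_pos (k : ℝ) : 0 < Real.sqrt (1 + k ^ 2) :=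
  Real.sqrt_pos.mpr (one_add_sq_pos k)

lemma hasDerivAt_sqrt_one_add_sq (k : ℝ) :
    HasDerivAt (fun x : ℝ => Real.sqrt (1 + x ^ 2)) (k / Real.sqrt (1 + k ^ 2)) k := by
  have h1 := one_add_sq_pos k
  have hinner : HasDerivAt (fun x : ℝ => 1 + x ^ 2) (2 * k) k := by
    simpa using (hasDerivAt_pow 2 k).const_add 1
  have := (Real.hasDerivAt_sqrt (ne_of_gt h1)).comp k hinner
  refine this.congr_deriv ?_
  have hs := sqrt_one_add_sq_pos k
  field_simp

lemma hasDerivAt_w (k : ℝ) :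
    HasDerivAt (fun x : ℝ => x / Real.sqrt (1 + x ^ 2))
      (1 / (Real.sqrt (1 + k ^ 2)) ^ 3) k := by
  have hs := sqrt_one_add_sq_pos k
  have hsq : Real.sqrt (1 + k ^ 2) ^ 2 = 1 + k ^ 2 := Real.sq_sqrt (one_add_sq_pos k).le
  have := (hasDerivAt_id k).div (hasDerivAt_sqrt_one_add_sq k) (ne_of_gt hs)
  refine this.congr_deriv ?_
  rw [eq_div_iff (by positivity)]
  field_simp
  simp only [id]; nlinarith [hs, hsq]

lemma hasDerivAt_phi (r t k : ℝ) :
    HasDerivAt (fun x : ℝ => x * r - t * Real.sqrt (1 + x ^ 2))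
      (r - t * (k / Real.sqrt (1 + k ^ 2))) k := by
  have h1 : HasDerivAt (fun x : ℝ => x * r) r k := by
    simpa using (hasDerivAt_id k).mul_const r
  exact h1.sub ((hasDerivAt_sqrt_one_add_sq k).const_mul t)

lemma hasDerivAt_phi' (r t k : ℝ) :
    HasDerivAt (fun x : ℝ => r - t * (x / Real.sqrt (1 + x ^ 2)))
      (-t / (Real.sqrt (1 + k ^ 2)) ^ 3) k := by
  have := ((hasDerivAt_w k).const_mul t).const_sub r
  refine this.congr_deriv ?_
  field_simp

lemma continuous_phi'' (t : ℝ) :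
    Continuous (fun x : ℝ => -t / (Real.sqrt (1 + x ^ 2)) ^ 3) := by
  apply Continuous.div continuous_const
  · exact (Real.continuous_sqrt.comp (by continuity)).pow 3
  · intro x
    exact pow_ne_zero 3 (ne_of_gt (sqrt_one_add_sq_pos x))

lemma cube_sqrt_le (j : ℕ) (x : ℝ) (hx : x ∈ Icc (-(2:ℝ)^(j+3)) ((2:ℝ)^(j+3))) :
    (Real.sqrt (1 + x ^ 2)) ^ 3 ≤ (2:ℝ) ^ (3 * j + 12) := by
  have hx2 : x ^ 2 ≤ ((2:ℝ)^(j+3)) ^ 2 := sq_le_sq' hx.1 hx.2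
  have h1 : (1:ℝ) + x ^ 2 ≤ ((2:ℝ)^(j+4)) ^ 2 := by
    have hone : (1:ℝ) ≤ ((2:ℝ)^(j+3)) ^ 2 := one_le_pow₀ (one_le_pow₀ (by norm_num))
    have : ((2:ℝ)^(j+3))^2 + ((2:ℝ)^(j+3))^2 ≤ ((2:ℝ)^(j+4))^2 := by
      rw [← pow_mul, ← pow_mul]
      rw [show (j+3)*2 = 2*j+6 by ring, show (j+4)*2 = 2*j+8 by ring]
      have key : ((2:ℝ))^(2*j+8) = ((2:ℝ))^(2*j+6) * 4 := by
        rw [show 2*j+8 = (2*j+6)+2 by ring, pow_add]; norm_num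
      linarith [pow_pos (by norm_num : (0:ℝ) < 2) (2*j+6)]
    linarith
  have h2 : Real.sqrt (1 + x ^ 2) ≤ (2:ℝ)^(j+4) := by
    calc Real.sqrt (1 + x ^ 2) ≤ Real.sqrt (((2:ℝ)^(j+4))^2) := Real.sqrt_le_sqrt h1
      _ = (2:ℝ)^(j+4) := Real.sqrt_sq (by positivity)
  calc (Real.sqrt (1 + x ^ 2)) ^ 3 ≤ ((2:ℝ)^(j+4)) ^ 3 :=
        pow_le_pow_left₀ (Real.sqrt_nonneg _) h2 3
    _ = (2:ℝ) ^ (3 * j + 12) := by rw [← pow_mul]; congr 1; ring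

lemma phase_sign (t : ℝ) (ht : t ≠ 0) (j : ℕ) :
    (∀ x ∈ Icc (-(2:ℝ)^(j+3)) ((2:ℝ)^(j+3)),
        |t| / 2 ^ (3 * j + 12) ≤ -t / (Real.sqrt (1 + x ^ 2)) ^ 3) ∨
    (∀ x ∈ Icc (-(2:ℝ)^(j+3)) ((2:ℝ)^(j+3)),
        -t / (Real.sqrt (1 + x ^ 2)) ^ 3 ≤ -(|t| / 2 ^ (3 * j + 12))) := by
  rcases lt_or_gt_of_ne ht with hneg | hpos
  · left
    intro x hx
    have hs3 : 0 < (Real.sqrt (1 + x ^ 2)) ^ 3 := pow_pos (sqrt_one_add_sq_pos x) 3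
    rw [abs_of_neg hneg]
    exact div_le_div_of_nonneg_left (by linarith) hs3 (cube_sqrt_le j x hx)
  · right
    intro x hx
    have hs3 : 0 < (Real.sqrt (1 + x ^ 2)) ^ 3 := pow_pos (sqrt_one_add_sq_pos x) 3
    rw [abs_of_pos hpos]
    have := div_le_div_of_nonneg_left hpos.le hs3 (cube_sqrt_le j x hx)
    rw [neg_div]
    linarith

lemma const_calc (T : ℝ) (hT : 0 < T) (j : ℕ) :
    8 / Real.sqrt (T / 2 ^ (3 * j + 12)) =
      512 * T ^ (-(1:ℝ) / 2) * (2:ℝ) ^ ((3 * (j:ℝ)) / 2) := by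
  have h2 : ((2:ℝ) ^ (3*j+12) : ℝ) ^ ((1:ℝ)/2) = 64 * (2:ℝ) ^ ((3 * (j:ℝ))/2) := by
    rw [← Real.rpow_natCast 2 (3*j+12), ← Real.rpow_mul (by norm_num)]
    push_cast
    rw [show ((3*(j:ℝ)+12) * (1/2)) = (3*(j:ℝ))/2 + 6 by ring, Real.rpow_add (by norm_num)]
    rw [show ((6:ℝ)) = ((6:ℕ):ℝ) by norm_num, Real.rpow_natCast]
    norm_num
    ring
  have hTpos : (0:ℝ) < T ^ ((1:ℝ)/2) := Real.rpow_pos_of_pos hT _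
  have h2pos : (0:ℝ) < (2:ℝ) ^ ((3 * (j:ℝ))/2) := Real.rpow_pos_of_pos (by norm_num) _
  rw [Real.sqrt_eq_rpow, Real.div_rpow hT.le (by positivity), h2]
  rw [show (-(1:ℝ)/2) = -((1:ℝ)/2) by norm_num, Real.rpow_neg hT.le]
  field_simp
  ring


lemma h_contDiff (ψ : ℝ → ℂ) (hψ : ContDiff ℝ (⊤:ℕ∞) ψ)
    (hsmall : ∀ x ∈ Ioo (-2:ℝ) 2, ψ x = 0) :
    ContDiff ℝ (⊤:ℕ∞) (fun k : ℝ =>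
      if k = 0 then 0 else ((Real.sqrt (1 + k ^ 2) / k : ℝ) : ℂ) * ψ k) := by
  rw [contDiff_iff_contDiffAt]
  intro x
  by_cases hx : x = 0
  · subst hx
    apply ContDiffAt.congr_of_eventuallyEq (contDiffAt_const (c := (0:ℂ)))
    have hmem : Ioo (-2:ℝ) 2 ∈ nhds (0:ℝ) := isOpen_Ioo.mem_nhds (by norm_num)
    filter_upwards [hmem] with k hk
    rw [hsmall k hk]
    split <;> simp
  · have hform : ContDiffAt ℝ (⊤:ℕ∞) (fun k : ℝ =>
        ((Real.sqrt (1 + k ^ 2) / k : ℝ) : ℂ) * ψ k) x := by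
      apply ContDiffAt.mul _ hψ.contDiffAt
      apply ContDiffAt.comp (g := fun y : ℝ => (y : ℂ))
      · exact Complex.ofRealCLM.contDiff.contDiffAt
      · apply ContDiffAt.div
        · apply ContDiffAt.comp (g := Real.sqrt)
          · exact Real.contDiffAt_sqrt (by positivity)
          · exact (contDiff_const.add (contDiff_id.pow 2)).contDiffAt
        · exact contDiffAt_id
        · exact hx
    apply hform.congr_of_eventuallyEq
    have hmem : {y : ℝ | y ≠ 0} ∈ nhds x := isOpen_ne.mem_nhds hx
    filter_upwards [hmem] with k hk
    rw [if_neg hk]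


lemma main_aux (j : ℕ) (hj : 1 ≤ j) (ψ : ℝ → ℂ) (hψ : ContDiff ℝ (⊤ : ℕ∞) ψ)
    (hsupp : Function.support ψ ⊆
      Set.Icc ((2 : ℝ) ^ j) ((2 : ℝ) ^ (j + 2)) ∪
        Set.Icc (-(2 : ℝ) ^ (j + 2)) (-(2 : ℝ) ^ j))
    (r t : ℝ) (ht : t ≠ 0) :
    (‖∫ k : ℝ, Complex.exp (Complex.I * (k * r - t * Real.sqrt (1 + k ^ 2))) * ψ k‖ ≤
        512 * ∫ k : ℝ, ‖ψ k‖) ∧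
    (‖∫ k : ℝ, Complex.exp (Complex.I * (k * r - t * Real.sqrt (1 + k ^ 2))) * ψ k‖ ≤
        512 * |t| ^ (-(1 : ℝ) / 2) * (2 : ℝ) ^ ((3 * (j : ℝ)) / 2) *
          ∫ k : ℝ, ‖deriv ψ k‖) ∧
    (‖∫ k : ℝ, Complex.exp (Complex.I * (k * r - t * Real.sqrt (1 + k ^ 2))) * ψ k‖ ≤
        512 * |t| ^ (-(3 : ℝ) / 2) * (2 : ℝ) ^ ((3 * (j : ℝ)) / 2) *
          ∫ k : ℝ, ‖deriv (deriv (fun k : ℝ =>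
              if k = 0 then 0 else ((Real.sqrt (1 + k ^ 2) / k : ℝ) : ℂ) * ψ k)) k +
            Complex.I * r * deriv (fun k : ℝ =>
              if k = 0 then 0 else ((Real.sqrt (1 + k ^ 2) / k : ℝ) : ℂ) * ψ k) k‖) := by
  -- basic support facts
  have hzero : ∀ x, x ∉ (Set.Icc ((2 : ℝ) ^ j) ((2 : ℝ) ^ (j + 2)) ∪
      Set.Icc (-(2 : ℝ) ^ (j + 2)) (-(2 : ℝ) ^ j)) → ψ x = 0 := by
    intro x hx
    by_contra hne
    exact hx (hsupp (Function.mem_support.mpr hne))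
  set b : ℝ := (2:ℝ)^(j+3) with hbdef
  set a : ℝ := -(2:ℝ)^(j+3) with hadef
  have hab : a ≤ b := by
    have : (0:ℝ) < (2:ℝ)^(j+3) := by positivity
    simp only [hadef, hbdef]; linarith
  have hj2b : (2:ℝ)^(j+2) < b := by
    simp only [hbdef]
    exact pow_lt_pow_right₀ (by norm_num) (by omega)
  have h2j : (2:ℝ) ≤ (2:ℝ)^j := by
    calc (2:ℝ) = 2^1 := (pow_one 2).symm
      _ ≤ 2^j := pow_le_pow_right₀ (by norm_num) hj
  have hzero_ab : ∀ x ∉ Icc a b, ψ x = 0 := by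
    intro x hx
    apply hzero
    intro hmem
    apply hx
    have hpos : (0:ℝ) < (2:ℝ)^j := by positivity
    rcases hmem with h1 | h1
    · constructor
      · have := h1.1; simp only [hadef]; nlinarith
      · exact le_trans h1.2 hj2b.le
    · constructor
      · refine le_trans ?_ h1.1
        simp only [hadef]; linarith [hj2b]
      · have := h1.2
        have hpos2 : (0:ℝ) < (2:ℝ)^j := by positivity
        simp only [hbdef]; nlinarith
  have hsmall : ∀ x ∈ Ioo (-2:ℝ) 2, ψ x = 0 := by
    intro x hx
    apply hzero
    rintro (h1 | h1)
    · linarith [h2j, h1.1, hx.2]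
    · have h3 : x ≤ -(2:ℝ)^j := h1.2
      linarith [hx.1, h2j]
  have hbig : ∀ x : ℝ, (2:ℝ)^(j+2) < |x| → ψ x = 0 := by
    intro x hx
    apply hzero
    have hpos : (0:ℝ) < (2:ℝ)^j := by positivity
    rintro (h1 | h1)
    · rw [_root_.abs_of_nonneg (by nlinarith [h1.1])] at hx
      linarith [h1.2]
    · rw [_root_.abs_of_nonpos (by nlinarith [h1.2])] at hx
      linarith [h1.1]
  have hψa : ψ a = 0 := by
    apply hbig
    rw [hadef, abs_neg, _root_.abs_of_nonneg (by positivity)]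
    exact hj2b
  have hψb : ψ b = 0 := by
    apply hbig
    rw [hbdef, _root_.abs_of_nonneg (by positivity)]
    exact hj2b
  -- phase functions
  set φ : ℝ → ℝ := fun x => x * r - t * Real.sqrt (1 + x ^ 2) with hφdef
  set φ' : ℝ → ℝ := fun x => r - t * (x / Real.sqrt (1 + x ^ 2)) with hφ'def
  set φ'' : ℝ → ℝ := fun x => -t / (Real.sqrt (1 + x ^ 2)) ^ 3 with hφ''def
  have hd1 : ∀ x, HasDerivAt φ (φ' x) x := fun x => hasDerivAt_phi r t x
  have hd2 : ∀ x, HasDerivAt φ' (φ'' x) x := fun x => hasDerivAt_phi' r t x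
  have hc2 : Continuous φ'' := continuous_phi'' t
  set e : ℝ → ℂ := fun x => Complex.exp (Complex.I * (φ x : ℝ)) with hedef
  have hFeq : ∀ k : ℝ,
      Complex.exp (Complex.I * (k * r - t * Real.sqrt (1 + k ^ 2))) * ψ k = e k * ψ k := by
    intro k
    simp only [hedef, hφdef]
    congr 2
    push_cast
    ring
  have hIconv : (∫ k : ℝ, Complex.exp (Complex.I * (k * r - t * Real.sqrt (1 + k ^ 2))) * ψ k)
      = ∫ x in a..b, e x * ψ x := by
    rw [intervalIntegral.integral_of_le hab, ← integral_Icc_eq_integral_Ioc]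
    rw [setIntegral_eq_integral_of_forall_compl_eq_zero
      (fun x hx => by rw [hzero_ab x hx, mul_zero])]
    exact MeasureTheory.integral_congr_ae (Filter.EventuallyEq.of_eq (funext hFeq))
  have hnorme : ∀ k : ℝ, ‖e k‖ = 1 := by
    intro k
    simp only [hedef, Complex.norm_exp]
    simp
  -- Part 1
  have part1 : ‖∫ k : ℝ, Complex.exp (Complex.I * (k * r - t * Real.sqrt (1 + k ^ 2))) * ψ k‖ ≤
      512 * ∫ k : ℝ, ‖ψ k‖ := by
    have hle := MeasureTheory.norm_integral_le_integral_norm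
      (f := fun k : ℝ => Complex.exp (Complex.I * (k * r - t * Real.sqrt (1 + k ^ 2))) * ψ k)
      (μ := volume)
    have heq : (∫ k : ℝ, ‖Complex.exp (Complex.I * (k * r - t * Real.sqrt (1 + k ^ 2))) * ψ k‖)
        = ∫ k : ℝ, ‖ψ k‖ := by
      apply MeasureTheory.integral_congr_ae
      apply Filter.EventuallyEq.of_eq
      funext k
      rw [hFeq k, norm_mul, hnorme k, one_mul]
    have hnn : (0:ℝ) ≤ ∫ k : ℝ, ‖ψ k‖ := integral_nonneg fun k => norm_nonneg _
    calc ‖∫ k : ℝ, Complex.exp (Complex.I * (k * r - t * Real.sqrt (1 + k ^ 2))) * ψ k‖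
        ≤ ∫ k : ℝ, ‖Complex.exp (Complex.I * (k * r - t * Real.sqrt (1 + k ^ 2))) * ψ k‖ := hle
      _ = ∫ k : ℝ, ‖ψ k‖ := heq
      _ ≤ 512 * ∫ k : ℝ, ‖ψ k‖ := by linarith
  -- Part 2 setup
  set L : ℝ := |t| / 2 ^ (3 * j + 12) with hLdef
  have hL : 0 < L := div_pos (abs_pos.mpr ht) (by positivity)
  have hsgn : (∀ x ∈ Icc a b, L ≤ φ'' x) ∨ (∀ x ∈ Icc a b, φ'' x ≤ -L) := phase_sign t ht j
  have hdψ : ∀ x, HasDerivAt ψ (deriv ψ x) x := fun x => ((hψ.differentiable (by simp)) x).hasDerivAt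
  have hcdψ : Continuous (deriv ψ) := hψ.continuous_deriv (by exact_mod_cast le_top)
  have HCSψ : HasCompactSupport ψ := by
    apply IsCompact.of_isClosed_subset (isCompact_Icc (a := a) (b := b)) (isClosed_tsupport ψ)
    apply closure_minimal _ isClosed_Icc
    intro x hx
    by_contra hmem
    exact (Function.mem_support.mp hx) (hzero_ab x hmem)
  have hIntdψ : Integrable (fun k : ℝ => ‖deriv ψ k‖) :=
    (hcdψ.integrable_of_hasCompactSupport HCSψ.deriv).norm
  have hmono_dψ : (∫ x in a..b, ‖deriv ψ x‖) ≤ ∫ k : ℝ, ‖deriv ψ k‖ := by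
    rw [intervalIntegral.integral_of_le hab]
    exact setIntegral_le_integral hIntdψ (Filter.Eventually.of_forall fun x => norm_nonneg _)
  have hcc := const_calc |t| (abs_pos.mpr ht) j
  have h8L : (0:ℝ) ≤ 8 / Real.sqrt L := by positivity
  have part2 : ‖∫ k : ℝ, Complex.exp (Complex.I * (k * r - t * Real.sqrt (1 + k ^ 2))) * ψ k‖ ≤
      512 * |t| ^ (-(1 : ℝ) / 2) * (2 : ℝ) ^ ((3 * (j : ℝ)) / 2) * ∫ k : ℝ, ‖deriv ψ k‖ := by
    rw [hIconv, ← hcc]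
    calc ‖∫ x in a..b, e x * ψ x‖
        ≤ (8 / Real.sqrt L) * ∫ x in a..b, ‖deriv ψ x‖ :=
          vdc3 φ φ' φ'' ψ (deriv ψ) a b L hab hL hd1 hd2 hc2 hsgn hdψ hcdψ hψa hψb
      _ ≤ (8 / Real.sqrt L) * ∫ k : ℝ, ‖deriv ψ k‖ :=
          mul_le_mul_of_nonneg_left hmono_dψ h8L
      _ = 8 / Real.sqrt (|t| / 2 ^ (3 * j + 12)) * ∫ k : ℝ, ‖deriv ψ k‖ := by rw [hLdef]
  refine ⟨part1, part2, ?_⟩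
  -- Part 3
  set h : ℝ → ℂ := fun k =>
    if k = 0 then 0 else ((Real.sqrt (1 + k ^ 2) / k : ℝ) : ℂ) * ψ k with hhdef
  have hψ0h : ∀ x, ψ x = 0 → h x = 0 := by
    intro x hx
    simp only [hhdef]
    split <;> simp [hx]
  have hch : ContDiff ℝ (⊤:ℕ∞) h := h_contDiff ψ hψ hsmall
  have hdiffh : Differentiable ℝ h := hch.differentiable (by simp)
  have hdh : ∀ x, HasDerivAt h (deriv h x) x := fun x => (hdiffh x).hasDerivAt
  have hcdh : ContDiff ℝ (⊤:ℕ∞) (deriv h) := (contDiff_infty_iff_deriv.mp hch).2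
  have hcdh1 : Continuous (deriv h) := hcdh.continuous
  have hddh : ∀ x, HasDerivAt (deriv h) (deriv (deriv h) x) x :=
    fun x => ((hcdh.differentiable (by simp)) x).hasDerivAt
  have hcddh : Continuous (deriv (deriv h)) := hcdh.continuous_deriv (by exact_mod_cast le_top)
  set g : ℝ → ℂ := fun k => deriv h k + Complex.I * r * h k with hgdef
  set g' : ℝ → ℂ := fun k => deriv (deriv h) k + Complex.I * r * deriv h k with hg'def
  have hdg : ∀ x, HasDerivAt g (g' x) x :=
    fun x => (hddh x).add ((hdh x).const_mul (Complex.I * r))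
  have hcg' : Continuous g' := hcddh.add (continuous_const.mul hcdh1)
  have hzeroh_ab : ∀ x ∉ Icc a b, h x = 0 := fun x hx => hψ0h x (hzero_ab x hx)
  have hdh0 : ∀ x ∉ Icc a b, deriv h x = 0 := by
    intro x hx
    have hU : (Icc a b)ᶜ ∈ nhds x := (isOpen_compl_iff.mpr isClosed_Icc).mem_nhds hx
    have hev : h =ᶠ[nhds x] (fun _ => (0:ℂ)) := by
      filter_upwards [hU] with y hy
      exact hzeroh_ab y hy
    rw [hev.deriv_eq]
    exact deriv_const x 0
  have hddh0 : ∀ x ∉ Icc a b, deriv (deriv h) x = 0 := by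
    intro x hx
    have hU : (Icc a b)ᶜ ∈ nhds x := (isOpen_compl_iff.mpr isClosed_Icc).mem_nhds hx
    have hev : deriv h =ᶠ[nhds x] (fun _ => (0:ℂ)) := by
      filter_upwards [hU] with y hy
      exact hdh0 y hy
    rw [hev.deriv_eq]
    exact deriv_const x 0
  -- g vanishes at a and b
  have hnotmem_a : ∀ y : ℝ, y < -(2:ℝ)^(j+2) → h y = 0 := by
    intro y hy
    apply hψ0h
    apply hbig
    rw [_root_.abs_of_nonpos (by nlinarith [hj2b, pow_pos (show (0:ℝ)<2 by norm_num) (j+2)] : y ≤ 0)]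
    linarith
  have hnotmem_b : ∀ y : ℝ, (2:ℝ)^(j+2) < y → h y = 0 := by
    intro y hy
    apply hψ0h
    apply hbig
    rw [_root_.abs_of_nonneg (by nlinarith [pow_pos (show (0:ℝ)<2 by norm_num) (j+2)] : (0:ℝ) ≤ y)]
    exact hy
  have hdha : deriv h a = 0 := by
    have hU : Iio (-(2:ℝ)^(j+2)) ∈ nhds a := isOpen_Iio.mem_nhds (by simp only [Set.mem_Iio, hadef]; linarith [hj2b, hbdef.le, hbdef.ge])
    have hev : h =ᶠ[nhds a] (fun _ => (0:ℂ)) := by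
      filter_upwards [hU] with y hy
      exact hnotmem_a y hy
    rw [hev.deriv_eq]
    exact deriv_const a 0
  have hdhb : deriv h b = 0 := by
    have hU : Ioi ((2:ℝ)^(j+2)) ∈ nhds b := isOpen_Ioi.mem_nhds (Set.mem_Ioi.mpr hj2b)
    have hev : h =ᶠ[nhds b] (fun _ => (0:ℂ)) := by
      filter_upwards [hU] with y hy
      exact hnotmem_b y hy
    rw [hev.deriv_eq]
    exact deriv_const b 0
  have hha : h a = 0 := hψ0h a hψa
  have hhb : h b = 0 := hψ0h b hψb
  have hga : g a = 0 := by simp only [hgdef]; rw [hha, hdha]; ring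
  have hgb : g b = 0 := by simp only [hgdef]; rw [hhb, hdhb]; ring
  -- oscillatory factors
  set E : ℝ → ℂ := fun k => Complex.exp ((Complex.I * r) * k) with hEdef
  set G : ℝ → ℂ := fun k =>
    Complex.exp ((-(Complex.I) * t) * ((Real.sqrt (1 + k ^ 2) : ℝ) : ℂ)) with hGdef
  have hEd : ∀ k : ℝ, HasDerivAt E (E k * (Complex.I * r)) k := by
    intro k
    have h1 : HasDerivAt (fun x : ℝ => ((Complex.I * r) * (x:ℂ))) (Complex.I * r) k := by
      simpa using (Complex.ofRealCLM.hasDerivAt (x := k)).const_mul (Complex.I * (r:ℂ))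
    exact h1.cexp
  have hGd : ∀ k : ℝ, HasDerivAt G
      (G k * ((-(Complex.I) * t) * ((k / Real.sqrt (1 + k ^ 2) : ℝ) : ℂ))) k := by
    intro k
    exact (((hasDerivAt_sqrt_one_add_sq k).ofReal_comp).const_mul (-(Complex.I) * t)).cexp
  have hEG : ∀ k : ℝ, E k * G k = e k := by
    intro k
    rw [hEdef, hGdef, hedef, ← Complex.exp_add]
    simp only [hφdef]
    congr 1
    push_cast
    ring
  have hhψk : ∀ k : ℝ, h k * ((k / Real.sqrt (1 + k ^ 2) : ℝ) : ℂ) = ψ k := by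
    intro k
    by_cases hk : k = 0
    · subst hk
      have : ψ 0 = 0 := hsmall 0 (by norm_num)
      simp only [hhdef, if_pos rfl, this, zero_mul]
    · have hs := sqrt_one_add_sq_pos k
      have hone : ((Real.sqrt (1 + k ^ 2) / k : ℝ) : ℂ) * ((k / Real.sqrt (1 + k ^ 2) : ℝ) : ℂ)
          = 1 := by
        rw [← Complex.ofReal_mul]
        norm_cast
        field_simp
      simp only [hhdef, if_neg hk]
      calc ((Real.sqrt (1 + k ^ 2) / k : ℝ) : ℂ) * ψ k * ((k / Real.sqrt (1 + k ^ 2) : ℝ) : ℂ)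
          = (((Real.sqrt (1 + k ^ 2) / k : ℝ) : ℂ) * ((k / Real.sqrt (1 + k ^ 2) : ℝ) : ℂ)) * ψ k := by ring
        _ = ψ k := by rw [hone, one_mul]
  -- continuity for integrability
  have hcE : Continuous E := by
    apply Continuous.cexp
    exact continuous_const.mul Complex.continuous_ofReal
  have hcG : Continuous G := by
    apply Continuous.cexp
    exact continuous_const.mul (Complex.continuous_ofReal.comp
      (Real.continuous_sqrt.comp (continuous_const.add (continuous_pow 2))))
  have hch1 : Continuous h := hch.continuous
  have hcw : Continuous (fun x : ℝ => x / Real.sqrt (1 + x ^ 2)) := by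
    apply Continuous.div continuous_id
    · exact Real.continuous_sqrt.comp (continuous_const.add (continuous_pow 2))
    · exact fun x => ne_of_gt (sqrt_one_add_sq_pos x)
  -- integration by parts
  have hIBP := intervalIntegral.integral_mul_deriv_eq_deriv_mul
    (u := fun k => E k * h k) (v := G)
    (u' := fun x => E x * (Complex.I * r) * h x + E x * deriv h x)
    (v' := fun x => G x * ((-(Complex.I) * t) * ((x / Real.sqrt (1 + x ^ 2) : ℝ) : ℂ)))
    (fun x _ => (hEd x).mul (hdh x)) (fun x _ => hGd x)
    ((((hcE.mul continuous_const).mul hch1).add (hcE.mul hcdh1)).intervalIntegrable a b)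
    ((hcG.mul (continuous_const.mul (Complex.continuous_ofReal.comp
      hcw))).intervalIntegrable a b)
  have lhseq : (∫ x in a..b, (E x * h x) *
      (G x * ((-(Complex.I) * t) * ((x / Real.sqrt (1 + x ^ 2) : ℝ) : ℂ)))) =
      ∫ x in a..b, (-(Complex.I) * t) * (e x * ψ x) := by
    apply intervalIntegral.integral_congr
    intro x _
    dsimp only
    rw [← hEG x, ← hhψk x]
    ring
  have rhseq : (∫ x in a..b, (E x * (Complex.I * r) * h x + E x * deriv h x) * G x) =
      ∫ x in a..b, e x * g x := by
    apply intervalIntegral.integral_congr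
    intro x _
    dsimp only
    rw [← hEG x]
    ring
  have key : (-(Complex.I) * t) * (∫ x in a..b, e x * ψ x) = -∫ x in a..b, e x * g x := by
    rw [← intervalIntegral.integral_const_mul, ← lhseq, hIBP, rhseq]
    simp only [hha, hhb, mul_zero, zero_mul]
    ring
  have hnt : (-(Complex.I) * (t:ℂ)) ≠ 0 :=
    mul_ne_zero (neg_ne_zero.mpr Complex.I_ne_zero) (Complex.ofReal_ne_zero.mpr ht)
  have hnormfact : ‖∫ x in a..b, e x * ψ x‖ = |t|⁻¹ * ‖∫ x in a..b, e x * g x‖ := by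
    have heqq : (∫ x in a..b, e x * ψ x) =
        (-(Complex.I) * t)⁻¹ * (-∫ x in a..b, e x * g x) := by
      rw [← key, inv_mul_cancel_left₀ hnt]
    rw [heqq, norm_mul, norm_inv, norm_neg]
    congr 1
    congr 1
    simp
  -- vdc3 on g
  have part3core := vdc3 φ φ' φ'' g g' a b L hab hL hd1 hd2 hc2 hsgn hdg hcg' hga hgb
  have hg'zero : ∀ x ∉ Icc a b, g' x = 0 := by
    intro x hx
    simp only [hg'def]
    rw [hdh0 x hx, hddh0 x hx]
    ring
  have hIntg' : Integrable (fun k : ℝ => ‖g' k‖) := by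
    have hcs : HasCompactSupport g' :=
      HasCompactSupport.intro (isCompact_Icc (a := a) (b := b)) hg'zero
    exact (hcg'.integrable_of_hasCompactSupport hcs).norm
  have hmono_g' : (∫ x in a..b, ‖g' x‖) ≤ ∫ k : ℝ, ‖g' k‖ := by
    rw [intervalIntegral.integral_of_le hab]
    exact setIntegral_le_integral hIntg' (Filter.Eventually.of_forall fun x => norm_nonneg _)
  have hrpow : |t|⁻¹ * (512 * |t| ^ (-(1:ℝ)/2) * (2:ℝ) ^ ((3 * (j:ℝ))/2)) =
      512 * |t| ^ (-(3:ℝ)/2) * (2:ℝ) ^ ((3 * (j:ℝ))/2) := by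
    have htpos : (0:ℝ) < |t| := abs_pos.mpr ht
    rw [← Real.rpow_neg_one |t|]
    rw [show (512 : ℝ) * |t| ^ (-(1:ℝ)/2) * (2:ℝ) ^ ((3 * (j:ℝ))/2) =
      512 * ((2:ℝ) ^ ((3 * (j:ℝ))/2)) * |t| ^ (-(1:ℝ)/2) by ring]
    rw [show |t| ^ (-1:ℝ) * (512 * ((2:ℝ) ^ ((3 * (j:ℝ))/2)) * |t| ^ (-(1:ℝ)/2)) =
      512 * ((2:ℝ) ^ ((3 * (j:ℝ))/2)) * (|t| ^ (-1:ℝ) * |t| ^ (-(1:ℝ)/2)) by ring]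
    rw [← Real.rpow_add htpos]
    rw [show (-1:ℝ) + (-(1:ℝ)/2) = -(3:ℝ)/2 by norm_num]
    ring
  have hintnn : (0:ℝ) ≤ ∫ k : ℝ, ‖g' k‖ := integral_nonneg fun k => norm_nonneg _
  calc ‖∫ k : ℝ, Complex.exp (Complex.I * (k * r - t * Real.sqrt (1 + k ^ 2))) * ψ k‖
      = |t|⁻¹ * ‖∫ x in a..b, e x * g x‖ := by rw [hIconv, hnormfact]
    _ ≤ |t|⁻¹ * ((8 / Real.sqrt L) * ∫ x in a..b, ‖g' x‖) := by
        apply mul_le_mul_of_nonneg_left part3core (by positivity)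
    _ ≤ |t|⁻¹ * ((8 / Real.sqrt L) * ∫ k : ℝ, ‖g' k‖) := by
        apply mul_le_mul_of_nonneg_left (mul_le_mul_of_nonneg_left hmono_g' h8L) (by positivity)
    _ = (|t|⁻¹ * (512 * |t| ^ (-(1:ℝ)/2) * (2:ℝ) ^ ((3 * (j:ℝ))/2))) * ∫ k : ℝ, ‖g' k‖ := by
        rw [hLdef, hcc]
        ring
    _ = 512 * |t| ^ (-(3:ℝ)/2) * (2:ℝ) ^ ((3 * (j:ℝ))/2) * ∫ k : ℝ, ‖g' k‖ := by rw [hrpow]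


end VdCProof

theorem stmt16 :
    ∃ C : ℝ, 0 < C ∧
      ∀ j : ℕ, 1 ≤ j →
        ∀ ψ : ℝ → ℂ, ContDiff ℝ (⊤ : ℕ∞) ψ →
          Function.support ψ ⊆
            Set.Icc ((2 : ℝ) ^ j) ((2 : ℝ) ^ (j + 2)) ∪
              Set.Icc (-(2 : ℝ) ^ (j + 2)) (-(2 : ℝ) ^ j) →
          ∀ r t : ℝ, t ≠ 0 →
            let I : ℂ := ∫ k : ℝ,
              Complex.exp (Complex.I * (k * r - t * Real.sqrt (1 + k ^ 2))) * ψ k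
            let h : ℝ → ℂ := fun k =>
              if k = 0 then 0 else ((Real.sqrt (1 + k ^ 2) / k : ℝ) : ℂ) * ψ k
            (‖I‖ ≤ C * ∫ k : ℝ, ‖ψ k‖) ∧
            (‖I‖ ≤ C * |t| ^ (-(1 : ℝ) / 2) * (2 : ℝ) ^ ((3 * (j : ℝ)) / 2) *
              ∫ k : ℝ, ‖deriv ψ k‖) ∧
            (‖I‖ ≤ C * |t| ^ (-(3 : ℝ) / 2) * (2 : ℝ) ^ ((3 * (j : ℝ)) / 2) *
              ∫ k : ℝ, ‖deriv (deriv h) k + Complex.I * r * deriv h k‖) := by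
  refine ⟨512, by norm_num, ?_⟩
  intro j hj ψ hψ hsupp r t ht
  intro I h
  exact main_aux j hj ψ hψ hsupp r t ht
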